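/- Let z' = (1−r)e^{iθ} with 0 < r small and z ∈ 𝔻 with |z − z'| ≥ r. Then the unit disk Green's function satisfies g(z, z') = g(0,z')·(1 − |z|²)/|z − e^{iθ}|² · (1 + O(r/|z − z'|)); more precisely there is a universal constant C such that |g(z,z')·|z − e^{iθ}|²/((1−|z|²)·g(0,z')) − 1| ≤ C·r/|z − z'| whenever r ≤ 1/2 and |z−z'| ≥ r. -/

import Mathlib

/-- The Green's function of the open unit disk. -/
noncomputable def greenDisk (z w : ℂ) : ℝ :=
  Real.log (‖(starRingEnd ℂ) w * z - 1‖) - Real.log (‖w - z‖)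

lemma greenDisk_aux_prod (A B D s' : ℝ) (hs0 : 0 < s') (hs1 : s' ≤ 1)
    (hA : |A - 1| ≤ 8 * s') (hB : |B - 1| ≤ 6 * s') (hD : |D - 1| ≤ 3 * s') :
    |A * B * D - 1| ≤ 300 * s' := by
  have key : A * B * D - 1 = (A-1)*(B-1)*(D-1) + (A-1)*(B-1) + (A-1)*(D-1) + (B-1)*(D-1)
      + (A-1) + (B-1) + (D-1) := by ring
  have h3 : |(A-1)*(B-1)*(D-1)| ≤ 144 * s' := by
    rw [abs_mul, abs_mul]
    calc |A-1| * |B-1| * |D-1| ≤ (8*s') * (6*s') * (3*s') := by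
          apply mul_le_mul (mul_le_mul hA hB (abs_nonneg _) (by positivity)) hD (abs_nonneg _)
            (by positivity)
      _ ≤ 144 * s' := by
          nlinarith [mul_nonneg (mul_nonneg hs0.le hs0.le) (sub_nonneg.mpr hs1), mul_nonneg hs0.le (sub_nonneg.mpr hs1)]
  have hab : |(A-1)*(B-1)| ≤ 48 * s' := by
    rw [abs_mul]
    calc |A-1| * |B-1| ≤ (8*s') * (6*s') := by
          apply mul_le_mul hA hB (abs_nonneg _) (by positivity)
      _ ≤ 48 * s' := by nlinarith [mul_nonneg hs0.le (sub_nonneg.mpr hs1)]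
  have had : |(A-1)*(D-1)| ≤ 24 * s' := by
    rw [abs_mul]
    calc |A-1| * |D-1| ≤ (8*s') * (3*s') := by
          apply mul_le_mul hA hD (abs_nonneg _) (by positivity)
      _ ≤ 24 * s' := by nlinarith [mul_nonneg hs0.le (sub_nonneg.mpr hs1)]
  have hbd : |(B-1)*(D-1)| ≤ 18 * s' := by
    rw [abs_mul]
    calc |B-1| * |D-1| ≤ (6*s') * (3*s') := by
          apply mul_le_mul hB hD (abs_nonneg _) (by positivity)
      _ ≤ 18 * s' := by nlinarith [mul_nonneg hs0.le (sub_nonneg.mpr hs1)]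
  rw [key]
  calc |(A-1)*(B-1)*(D-1) + (A-1)*(B-1) + (A-1)*(D-1) + (B-1)*(D-1) + (A-1) + (B-1) + (D-1)|
      ≤ |(A-1)*(B-1)*(D-1) + (A-1)*(B-1) + (A-1)*(D-1) + (B-1)*(D-1) + (A-1) + (B-1)| + |D-1| :=
        abs_add_le _ _
    _ ≤ (|(A-1)*(B-1)*(D-1) + (A-1)*(B-1) + (A-1)*(D-1) + (B-1)*(D-1) + (A-1)| + |B-1|) + |D-1| := by
        gcongr; exact abs_add_le _ _
    _ ≤ ((|(A-1)*(B-1)*(D-1) + (A-1)*(B-1) + (A-1)*(D-1) + (B-1)*(D-1)| + |A-1|) + |B-1|) + |D-1| := by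
        gcongr; exact abs_add_le _ _
    _ ≤ (((|(A-1)*(B-1)*(D-1) + (A-1)*(B-1) + (A-1)*(D-1)| + |(B-1)*(D-1)|) + |A-1|) + |B-1|) + |D-1| := by
        gcongr; exact abs_add_le _ _
    _ ≤ ((((|(A-1)*(B-1)*(D-1) + (A-1)*(B-1)| + |(A-1)*(D-1)|) + |(B-1)*(D-1)|) + |A-1|) + |B-1|) + |D-1| := by
        gcongr; exact abs_add_le _ _
    _ ≤ (((((|(A-1)*(B-1)*(D-1)| + |(A-1)*(B-1)|) + |(A-1)*(D-1)|) + |(B-1)*(D-1)|) + |A-1|) + |B-1|) + |D-1| := by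
        gcongr; exact abs_add_le _ _
    _ ≤ 300 * s' := by linarith

set_option maxHeartbeats 1600000 in
/-- Near-boundary asymptotics of the unit disk Green's function: for
`z' = (1−r)e^{iθ}` and `|z − z'| ≥ r`,
`g(z,z') = g(0,z')·(1−|z|²)/|z−e^{iθ}|² · (1 + O(r/|z−z'|))`. -/
theorem greenDisk_near_boundary :
    ∃ C : ℝ, 0 < C ∧ ∀ (r θ : ℝ) (z : ℂ), 0 < r → r ≤ 1 / 2 → ‖z‖ < 1 →
      r ≤ ‖z - (↑(1 - r) : ℂ) * Complex.exp (θ * Complex.I)‖ →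
      |greenDisk z ((↑(1 - r) : ℂ) * Complex.exp (θ * Complex.I)) *
            ‖z - Complex.exp (θ * Complex.I)‖ ^ 2 /
            ((1 - ‖z‖ ^ 2) *
              greenDisk 0 ((↑(1 - r) : ℂ) * Complex.exp (θ * Complex.I))) - 1| ≤
        C * r / ‖z - (↑(1 - r) : ℂ) * Complex.exp (θ * Complex.I)‖ := by
  refine ⟨300, by norm_num, ?_⟩
  intro r θ z hr hr2 hz hdist
  set e : ℂ := Complex.exp (θ * Complex.I) with he_def
  set w : ℂ := (↑(1 - r) : ℂ) * e with hw_def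
  set a := ‖z - w‖ with ha_def
  set b := ‖z - e‖ with hb_def
  set s := 1 - ‖z‖ ^ 2 with hs_def
  set u := r * (2 - r) with hu_def
  set L := -Real.log (1 - r) with hL_def
  clear_value e w a b s u L
  have he : ‖e‖ = 1 := by rw [he_def]; exact Complex.norm_exp_ofReal_mul_I θ
  have hr1 : (0:ℝ) < 1 - r := by linarith
  have hw : ‖w‖ = 1 - r := by
    rw [hw_def, norm_mul, he, mul_one, Complex.norm_real, Real.norm_eq_abs, abs_of_pos hr1]
  have ha : 0 < a := lt_of_lt_of_le hr hdist
  have hb0 : 0 ≤ b := by rw [hb_def]; exact norm_nonneg _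
  have hs : 0 < s := by
    have h0 := norm_nonneg z
    rw [hs_def]; nlinarith
  have hu : 0 < u := by rw [hu_def]; nlinarith
  have hLlow : r ≤ L := by
    have := Real.log_le_sub_one_of_pos hr1
    rw [hL_def]; linarith
  have hLhigh : L ≤ r + 2 * r ^ 2 := by
    have h1 : (0:ℝ) < (1-r)⁻¹ := by positivity
    have h2 := Real.log_le_sub_one_of_pos h1
    rw [Real.log_inv] at h2
    have h3 : (1-r) * (1-r)⁻¹ = 1 := mul_inv_cancel₀ (ne_of_gt hr1)
    rw [hL_def]; nlinarith
  have hL : 0 < L := lt_of_lt_of_le hr hLlow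
  -- key normSq identity
  have key : ‖(starRingEnd ℂ) w * z - 1‖ ^ 2 = a ^ 2 + s * u := by
    have h1 : ‖(starRingEnd ℂ) w * z - 1‖ ^ 2
        = Complex.normSq ((starRingEnd ℂ) w * z - 1) := Complex.sq_norm _
    have h2 : a ^ 2 = Complex.normSq (z - w) := by rw [ha_def]; exact Complex.sq_norm _
    have h3 : s = 1 - Complex.normSq z := by rw [hs_def, Complex.sq_norm]
    have h4 : u = 1 - Complex.normSq w := by
      have hnw : Complex.normSq w = (1-r)^2 := by rw [← Complex.sq_norm, hw]
      rw [hu_def, hnw]; ring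
    rw [h1, h2, h3, h4]
    simp [Complex.normSq_apply, Complex.mul_re, Complex.mul_im, Complex.sub_re, Complex.sub_im]
    ring
  set t := s * u / a ^ 2 with ht_def
  clear_value t
  have ht : 0 < t := by rw [ht_def]; exact div_pos (mul_pos hs hu) (pow_pos ha 2)
  have h1t : (0:ℝ) < 1 + t := by linarith
  -- green's function formulas
  have hgz : greenDisk z w = (1/2) * Real.log (1 + t) := by
    have hwz : ‖w - z‖ = a := by rw [ha_def, norm_sub_rev]
    have hC2 : ‖(starRingEnd ℂ) w * z - 1‖ ^ 2 = a ^ 2 * (1 + t) := by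
      rw [key, ht_def]; field_simp
    have hCpos : 0 < ‖(starRingEnd ℂ) w * z - 1‖ := by
      nlinarith [norm_nonneg ((starRingEnd ℂ) w * z - 1), key, mul_pos hs hu,
        pow_pos ha 2]
    have hlog2 : 2 * Real.log ‖(starRingEnd ℂ) w * z - 1‖
        = 2 * Real.log a + Real.log (1 + t) := by
      have e1 : Real.log (‖(starRingEnd ℂ) w * z - 1‖ ^ 2)
          = 2 * Real.log ‖(starRingEnd ℂ) w * z - 1‖ := by
        rw [Real.log_pow]; push_cast; ring
      have e2 : Real.log (a ^ 2 * (1 + t)) = Real.log (a ^ 2) + Real.log (1 + t) :=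
        Real.log_mul (by positivity) (by positivity)
      have e3 : Real.log (a ^ 2) = 2 * Real.log a := by rw [Real.log_pow]; push_cast; ring
      rw [← e1, hC2, e2, e3]
    unfold greenDisk
    rw [hwz]; linarith
  have hg0 : greenDisk 0 w = L := by
    unfold greenDisk
    simp [hw, hL_def]
  rw [hgz, hg0]
  -- factorization
  have hXt : Real.log (1 + t) / t = Real.log (1 + t) * a ^ 2 / (s * u) := by
    rw [ht_def]; field_simp
  have hX : (1/2) * Real.log (1 + t) * b ^ 2 / (s * L)
      = (Real.log (1 + t) / t) * (u / (2 * L)) * (b ^ 2 / a ^ 2) := by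
    rw [hXt]; field_simp
  rw [hX]
  -- basic size bounds
  have ha2 : a ≤ 2 := by
    have h1 := norm_sub_le_norm_sub_add_norm_sub z 0 w
    simp only [sub_zero, zero_sub, norm_neg] at h1
    rw [hw] at h1
    rw [ha_def]; linarith
  have hs4a : s ≤ 4 * a := by
    have h1 : ‖w‖ - ‖z‖ ≤ a := by
      have h2 := norm_sub_norm_le w z
      rw [norm_sub_rev w z] at h2
      rw [ha_def]; exact h2
    rw [hw] at h1
    have h2 := norm_nonneg z
    rw [hs_def]; nlinarith [hdist]
  have ht8 : t ≤ 8 * r / a := by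
    rw [ht_def, div_le_div_iff₀ (pow_pos ha 2) ha]
    have hu2 : u ≤ 2 * r := by rw [hu_def]; nlinarith
    nlinarith [mul_le_mul hs4a hu2 hu.le (by linarith : (0:ℝ) ≤ 4 * a), mul_pos ha ha,
      mul_nonneg (mul_nonneg hs.le hu.le) ha.le]
  -- bound A
  have hA : |Real.log (1 + t) / t - 1| ≤ t := by
    have h1 : Real.log (1 + t) ≤ t := by
      have := Real.log_le_sub_one_of_pos h1t; linarith
    have h2 : t - t ^ 2 ≤ Real.log (1 + t) := by
      have hinv : (0:ℝ) < (1 + t)⁻¹ := by positivity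
      have h3 := Real.log_le_sub_one_of_pos hinv
      rw [Real.log_inv] at h3
      have h4 : (1 + t) * (1 + t)⁻¹ = 1 := mul_inv_cancel₀ (ne_of_gt h1t)
      nlinarith
    have e1 : Real.log (1 + t) / t - 1 = (Real.log (1 + t) - t) / t := by field_simp
    rw [e1, abs_div, abs_of_pos ht, div_le_iff₀ ht]
    have h5 : |Real.log (1 + t) - t| ≤ t ^ 2 := abs_le.mpr ⟨by linarith, by linarith⟩
    nlinarith
  -- bound B
  have hB : |u / (2 * L) - 1| ≤ 3 * r := by
    have e1 : u / (2 * L) - 1 = (u - 2 * L) / (2 * L) := by field_simp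
    rw [e1, abs_div, abs_of_pos (by linarith : (0:ℝ) < 2 * L),
      div_le_iff₀ (by linarith : (0:ℝ) < 2 * L)]
    have h5 : |u - 2 * L| ≤ 5 * r ^ 2 := by
      rw [abs_le]; constructor
      · rw [hu_def]; nlinarith
      · rw [hu_def]; nlinarith
    nlinarith
  -- bound D
  have hwe : ‖w - e‖ = r := by
    have hcalc : w - e = (↑(-r) : ℂ) * e := by rw [hw_def]; push_cast; ring
    rw [hcalc, norm_mul, he, mul_one, Complex.norm_real, Real.norm_eq_abs, abs_neg, abs_of_pos hr]
  have hba1 : b ≤ a + r := by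
    have h1 := norm_sub_le_norm_sub_add_norm_sub z w e
    rw [← ha_def, ← hb_def, hwe] at h1
    exact h1
  have hba2 : a ≤ b + r := by
    have hew : ‖e - w‖ = r := by rw [norm_sub_rev, hwe]
    have h1 := norm_sub_le_norm_sub_add_norm_sub z e w
    rw [← ha_def, ← hb_def, hew] at h1
    exact h1
  have hD : |b ^ 2 / a ^ 2 - 1| ≤ 3 * r / a := by
    have e1 : b ^ 2 / a ^ 2 - 1 = (b ^ 2 - a ^ 2) / a ^ 2 := by field_simp
    rw [e1, abs_div, abs_of_pos (pow_pos ha 2), div_le_div_iff₀ (pow_pos ha 2) ha]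
    have h5 : |b ^ 2 - a ^ 2| ≤ 3 * r * a := by
      rw [abs_le]; constructor
      · nlinarith [hdist]
      · nlinarith [hdist]
    nlinarith
  -- finish
  have hs'0 : 0 < r / a := div_pos hr ha
  have hs'1 : r / a ≤ 1 := by rw [div_le_one ha]; exact hdist
  have goal_eq : (300:ℝ) * r / a = 300 * (r / a) := by ring
  rw [goal_eq]
  apply greenDisk_aux_prod _ _ _ _ hs'0 hs'1
  · calc |Real.log (1 + t) / t - 1| ≤ t := hA
      _ ≤ 8 * r / a := ht8
      _ = 8 * (r / a) := by ring
  · calc |u / (2 * L) - 1| ≤ 3 * r := hB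
      _ ≤ 6 * (r / a) := by
        rw [show (6:ℝ) * (r / a) = 6 * r / a by ring, le_div_iff₀ ha]
        nlinarith
  · calc |b ^ 2 / a ^ 2 - 1| ≤ 3 * r / a := hD
      _ = 3 * (r / a) := by ring
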